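/- The language L_o = { aᵐbⁿ : m,n ≥ 0 and m ≤ n ≤ 2m } over the alphabet {a,b} is accepted by a stateless sensing 5'→3' WK automaton (namely the one with a single state q and transitions {q} = δ(q,a,b) and {q} = δ(q,a,bb)), but L_o is not accepted by any deterministic sensing 5'→3' WK automaton. -/

import Mathlib

open Computability

/-- The two-letter alphabet `{a, b}`. -/
inductive Letter : Type
  | a : Letter
  | b : Letter
deriving DecidableEq

instance : Fintype Letter :=
  ⟨⟨{Letter.a, Letter.b}, by simp⟩, fun x => by cases x <;> simp⟩

open Letter

/-- A sensing 5'→3' Watson-Crick automaton over the alphabet `T` with state set `Q`: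
an initial state `q0`, a set `F` of final states, and a transition mapping
`δ : Q × T* × T* → 2^Q` that is nonempty for only finitely many triples. -/
structure WKAutomaton (T : Type) (Q : Type) where
  q0 : Q
  F : Set Q
  δ : Q → List T → List T → Set Q
  finite_delta : {t : Q × List T × List T | (δ t.1 t.2.1 t.2.2).Nonempty}.Finite

namespace WKAutomaton

variable {T Q : Type}

/-- One computation step on configurations:
`(q, x ++ w' ++ y) ⇒ (q', w')` iff `q' ∈ δ q x y`. -/
def Step (A : WKAutomaton T Q) (c c' : Q × List T) : Prop :=
  ∃ x y : List T, c.2 = x ++ c'.2 ++ y ∧ c'.1 ∈ A.δ c.1 x y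

/-- The accepted language: words `w` with `(q₀, w) ⇒* (q_F, λ)` for some final `q_F`. -/
def Lang (A : WKAutomaton T Q) : Set (List T) :=
  {w | ∃ qf ∈ A.F, Relation.ReflTransGen A.Step (A.q0, w) (qf, [])}

/-- `A` is deterministic: in every configuration at most one computation step
(choice of `x`, `y`, `w'`, `q'`) is applicable. -/
def Deterministic (A : WKAutomaton T Q) : Prop :=
  ∀ (q : Q) (w x₁ y₁ w₁ x₂ y₂ w₂ : List T) (q₁ q₂ : Q),
    w = x₁ ++ w₁ ++ y₁ → q₁ ∈ A.δ q x₁ y₁ →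
    w = x₂ ++ w₂ ++ y₂ → q₂ ∈ A.δ q x₂ y₂ →
    x₁ = x₂ ∧ y₁ = y₂ ∧ w₁ = w₂ ∧ q₁ = q₂

/-- `A` is quasi-deterministic: for every configuration `(q,w)`, whenever
`(q,w) ⇒ (p,u)` and `(q,w) ⇒ (r,v)`, it holds that `p = r`. -/
def QuasiDet (A : WKAutomaton T Q) : Prop :=
  ∀ (q : Q) (w : List T) (p r : Q) (u v : List T),
    A.Step (q, w) (p, u) → A.Step (q, w) (r, v) → p = r

/-- `A` is state-deterministic: for every state `q` there is at most one state `p`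
with `p ∈ δ(q,u,v)` for some words `u`, `v`. -/
def StateDet (A : WKAutomaton T Q) : Prop :=
  ∀ (q p₁ p₂ : Q) (u₁ v₁ u₂ v₂ : List T),
    p₁ ∈ A.δ q u₁ v₁ → p₂ ∈ A.δ q u₂ v₂ → p₁ = p₂

/-- `A` is stateless: `Q = F = {q₀}`. -/
def Stateless (A : WKAutomaton T Q) : Prop :=
  (∀ q : Q, q = A.q0) ∧ A.F = {A.q0}

/-- `A` is all-final: `Q = F`. -/
def AllFinal (A : WKAutomaton T Q) : Prop := A.F = Set.univ

/-- `A` is simple: at most one head reads in each step. -/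
def Simple (A : WKAutomaton T Q) : Prop :=
  ∀ (q : Q) (u v : List T), (A.δ q u v).Nonempty → u = [] ∨ v = []

/-- `A` is 1-limited: exactly one letter is read in each step. -/
def OneLimited (A : WKAutomaton T Q) : Prop :=
  ∀ (q : Q) (u v : List T), (A.δ q u v).Nonempty →
    (u = [] ∧ v.length = 1) ∨ (u.length = 1 ∧ v = [])

end WKAutomaton

/-- Equality of languages modulo the empty word. -/
def EqModLambda {T : Type} (L₁ L₂ : Set (List T)) : Prop :=
  ∀ w : List T, w ≠ [] → (w ∈ L₁ ↔ w ∈ L₂)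

/-- `L` is accepted (modulo the empty word) by some sensing 5'→3' WK automaton
with a finite state set satisfying the property `P`. -/
def AcceptsWith (T : Type) (P : ∀ Q : Type, WKAutomaton T Q → Prop)
    (L : Set (List T)) : Prop :=
  ∃ (Q : Type) (_ : Finite Q) (A : WKAutomaton T Q), P Q A ∧ EqModLambda A.Lang L

/-- The language `L_o = { aᵐbⁿ : m ≤ n ≤ 2m }`. -/
def Lo : Set (List Letter) :=
  {w | ∃ m n : ℕ, m ≤ n ∧ n ≤ 2 * m ∧ w = List.replicate m a ++ List.replicate n b}


namespace WKProof

/-- the word a^i b^j -/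
def wd (i j : ℕ) : List Letter := List.replicate i a ++ List.replicate j b

lemma wd_length (i j : ℕ) : (wd i j).length = i + j := by simp [wd]

lemma count_a_wd (i j : ℕ) : (wd i j).count a = i := by
  simp [wd, List.count_replicate]

lemma count_b_wd (i j : ℕ) : (wd i j).count b = j := by
  simp [wd, List.count_replicate]

lemma wd_inj {i j i' j' : ℕ} (h : wd i j = wd i' j') : i = i' ∧ j = j' := by
  constructor
  · have := congrArg (List.count a) h
    simpa [count_a_wd] using this
  · have := congrArg (List.count b) h
    simpa [count_b_wd] using this

lemma take_wd (n i j : ℕ) (hn : n ≤ i + j) :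
    (wd i j).take n = wd (min n i) (n - i) := by
  rw [wd, List.take_append, List.take_replicate, List.take_replicate]
  simp only [List.length_replicate]
  have h1 : min n i = n ⊓ i := rfl
  have h2 : (n - i) ⊓ j = n - i := by omega
  rw [h2]; rfl

lemma drop_wd (n i j : ℕ) :
    (wd i j).drop n = wd (i - n) (j - (n - i)) := by
  rw [wd, List.drop_append, List.drop_replicate, List.drop_replicate]
  simp [wd]

lemma split_wd {i j : ℕ} {x z : List Letter} (h : wd i j = x ++ z) :
    x = wd (min x.length i) (x.length - i) ∧
    z = wd (i - x.length) (j - (x.length - i)) := by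
  have hlen : x.length ≤ i + j := by
    have := congrArg List.length h
    simp [wd_length] at this
    omega
  constructor
  · have hx : (wd i j).take x.length = x := by rw [h]; simp
    conv_lhs => rw [← hx]
    rw [take_wd _ _ _ hlen]
  · have hz : (wd i j).drop x.length = z := by rw [h]; simp
    conv_lhs => rw [← hz]
    rw [drop_wd]

lemma rep_a_eq_wd (s : ℕ) : List.replicate s a = wd s 0 := by simp [wd]
lemma rep_b_eq_wd (t : ℕ) : List.replicate t b = wd 0 t := by simp [wd]

lemma wd_append_split_a {i1 i2 j : ℕ} :
    wd (i1 + i2) j = List.replicate i1 a ++ wd i2 j := by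
  rw [wd, List.replicate_add, List.append_assoc]; rfl

lemma wd_append_split_b {i j1 j2 : ℕ} :
    wd i (j1 + j2) = wd i j1 ++ List.replicate j2 b := by
  rw [wd, List.replicate_add, wd, List.append_assoc]

lemma wd_eq_nil {i j : ℕ} : wd i j = [] ↔ i = 0 ∧ j = 0 := by
  constructor
  · intro h
    have := congrArg List.length h
    simp [wd_length] at this
    omega
  · rintro ⟨rfl, rfl⟩; rfl

lemma wd_mem_Lo {m n : ℕ} : wd m n ∈ Lo ↔ m ≤ n ∧ n ≤ 2 * m := by
  constructor
  · rintro ⟨m', n', h1, h2, h3⟩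
    obtain ⟨rfl, rfl⟩ := wd_inj h3
    exact ⟨h1, h2⟩
  · rintro ⟨h1, h2⟩
    exact ⟨m, n, h1, h2, rfl⟩

end WKProof

namespace WKProof
section Orbit

variable {E : Type} (g : E → Option E) (c : E → ℕ)

/-- the orbit of the partial map `g` -/
def orb (e : E) : ℕ → Option E
  | 0 => some e
  | k+1 => (orb e k).bind g

/-- cumulative cost along the orbit -/
def cum (e : E) : ℕ → ℕ
  | 0 => 0
  | k+1 => cum e k + (orb g e k).elim 0 c

lemma orb_none_stable {e : E} {k k' : ℕ} (h : orb g e k = none) (hkk : k ≤ k') :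
    orb g e k' = none := by
  induction k' with
  | zero => simpa [Nat.le_zero.1 hkk] using h
  | succ k' ih =>
    rcases Nat.lt_or_ge k (k'+1) with hlt | hge
    · have := ih (by omega)
      simp [orb, this]
    · have : k = k' + 1 := by omega
      rw [← this]; exact h

lemma orb_shift {e e₁ : E} (h : g e = some e₁) (k : ℕ) :
    orb g e (k+1) = orb g e₁ k := by
  induction k with
  | zero => simp [orb, h]
  | succ k ih => rw [orb, ih]; rfl

lemma cum_shift {e e₁ : E} (h : g e = some e₁) (k : ℕ) :
    cum g c e (k+1) = c e + cum g c e₁ k := by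
  induction k with
  | zero => simp [cum, orb]
  | succ k ih =>
    rw [cum, ih, cum, orb_shift g h k]
    ring

lemma cum_mono {e : E} : Monotone (cum g c e) := by
  apply monotone_nat_of_le_succ
  intro k
  rw [cum]
  omega

section Cycle

variable {e : E} {u p : ℕ}

lemma orb_per (hcyc : orb g e (u + p) = orb g e u) : ∀ k, u ≤ k → orb g e (k + p) = orb g e k := by
  intro k hk
  obtain ⟨d, rfl⟩ := Nat.exists_eq_add_of_le hk
  induction d with
  | zero => simpa using hcyc
  | succ d ih =>
    have : u + (d + 1) + p = (u + d + p) + 1 := by omega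
    rw [this, orb, ih (by omega)]
    rfl

lemma cum_per (hcyc : orb g e (u + p) = orb g e u) : ∀ k, u ≤ k →
    cum g c e (k + p) = cum g c e k + (cum g c e (u+p) - cum g c e u) := by
  intro k hk
  obtain ⟨d, rfl⟩ := Nat.exists_eq_add_of_le hk
  induction d with
  | zero =>
    simp only [Nat.add_zero]
    have := cum_mono g c (e := e) (Nat.le_add_right u p)
    omega
  | succ d ih =>
    have h1 : u + (d + 1) + p = (u + d + p) + 1 := by omega
    have h2 : u + (d + 1) = (u + d) + 1 := by omega
    rw [h1, cum, h2, cum, ih (by omega), orb_per g hcyc (u+d) (by omega)]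
    ring

lemma cum_mul_per (hcyc : orb g e (u + p) = orb g e u) : ∀ ℓ,
    cum g c e (u + ℓ * p) = cum g c e u + ℓ * (cum g c e (u+p) - cum g c e u) := by
  intro ℓ
  induction ℓ with
  | zero => simp
  | succ ℓ ih =>
    have h1 : u + (ℓ + 1) * p = (u + ℓ * p) + p := by ring
    rw [h1, cum_per g c hcyc _ (by omega), ih]
    ring

end Cycle

/-- Exit predicate: starting at `e` with counter value `n`, follow the (deterministic)
orbit of `g`, paying costs, until the first time the remaining counter is `< N0`;
at that moment `P state remaining` must hold. -/
def ExitP (N0 : ℕ) (P : E → ℕ → Prop) (e : E) (n : ℕ) : Prop :=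
  ∃ k e', orb g e k = some e' ∧ cum g c e k ≤ n ∧ n < cum g c e k + N0 ∧
    (∀ k' < k, N0 + cum g c e k' ≤ n) ∧ P e' (n - cum g c e k)

lemma exit_periodic_one (N0 : ℕ) (P : E → ℕ → Prop) (e : E) [Finite E] :
    ∃ Th Pd, 1 ≤ Pd ∧ ∀ n, Th ≤ n →
      (ExitP g c N0 P e n ↔ ExitP g c N0 P e (n + Pd)) := by
  classical
  haveI := Fintype.ofFinite E
  obtain ⟨x, y, hxy, hmap⟩ := Finite.exists_ne_map_eq_of_infinite (fun k : ℕ => orb g e k)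
  obtain ⟨u, p, hp, hcyc⟩ : ∃ u p, 1 ≤ p ∧ orb g e (u + p) = orb g e u := by
    rcases Nat.lt_or_ge x y with h | h
    · exact ⟨x, y - x, by omega, by rw [show x + (y-x) = y by omega]; exact hmap.symm⟩
    · exact ⟨y, x - y, by omega, by rw [show y + (x-y) = x by omega]; exact hmap⟩
  rcases horb : orb g e u with _ | e₁
  · -- orbit dies: eventually no exits
    refine ⟨N0 + cum g c e u, 1, le_refl _, ?_⟩
    intro n hn
    have hno : ∀ m, N0 + cum g c e u ≤ m → ¬ ExitP g c N0 P e m := by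
      rintro m hm ⟨k, e', hk, h1, h2, h3, h4⟩
      rcases Nat.lt_or_ge k u with hku | hku
      · have : cum g c e k ≤ cum g c e u := cum_mono g c (by omega)
        omega
      · rw [orb_none_stable g horb hku] at hk
        exact nomatch hk
    simp only [hno n hn, hno (n+1) (by omega)]
  · rcases Nat.eq_zero_or_pos (cum g c e (u+p) - cum g c e u) with hγ0 | hγ1
    · -- zero cycle cost: cost bounded, eventually no exits
      refine ⟨N0 + cum g c e (u+p), 1, le_refl _, ?_⟩
      have hbound : ∀ k, cum g c e k ≤ cum g c e (u+p) := by
        intro k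
        have h1 : cum g c e k ≤ cum g c e (u + k * p) :=
          cum_mono g c (by nlinarith)
        have h2 := cum_mul_per g c hcyc k
        rw [hγ0, Nat.mul_zero, Nat.add_zero] at h2
        have h3 : cum g c e u ≤ cum g c e (u+p) := cum_mono g c (by omega)
        omega
      intro n hn
      have hno : ∀ m, N0 + cum g c e (u+p) ≤ m → ¬ ExitP g c N0 P e m := by
        rintro m hm ⟨k, e', hk, h1, h2, h3, h4⟩
        have := hbound k
        omega
      simp only [hno n hn, hno (n+1) (by omega)]
    · -- positive cycle cost γ : period γ
      have hmup : cum g c e u ≤ cum g c e (u+p) := cum_mono g c (by omega)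
      refine ⟨N0 + cum g c e (u+p) + (cum g c e (u+p) - cum g c e u),
        cum g c e (u+p) - cum g c e u, hγ1, ?_⟩
      intro n hn
      constructor
      · rintro ⟨k, e', hk, h1, h2, h3, h4⟩
        have hkup : u + p < k := by
          by_contra hcon
          have : cum g c e k ≤ cum g c e (u+p) := cum_mono g c (by omega)
          omega
        have hck := cum_per g c hcyc k (by omega)
        refine ⟨k + p, e', ?_, by omega, by omega, ?_, ?_⟩
        · rw [orb_per g hcyc k (by omega)]; exact hk
        · intro j hj
          rcases Nat.lt_or_ge j (u+p) with hju | hju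
          · have : cum g c e j ≤ cum g c e (u+p) := cum_mono g c (by omega)
            omega
          · have hj2 := cum_per g c hcyc (j - p) (by omega)
            rw [show j - p + p = j by omega] at hj2
            have := h3 (j - p) (by omega)
            omega
        · have heq : n + (cum g c e (u+p) - cum g c e u) - cum g c e (k + p)
              = n - cum g c e k := by omega
          rw [heq]; exact h4
      · rintro ⟨k, e', hk, h1, h2, h3, h4⟩
        have hkup : u + p < k := by
          by_contra hcon
          have : cum g c e k ≤ cum g c e (u+p) := cum_mono g c (by omega)
          omega
        have hck := cum_per g c hcyc (k - p) (by omega)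
        rw [show k - p + p = k by omega] at hck
        refine ⟨k - p, e', ?_, by omega, by omega, ?_, ?_⟩
        · rw [← orb_per g hcyc (k-p) (by omega), show k - p + p = k by omega]
          exact hk
        · intro j hj
          rcases Nat.lt_or_ge j u with hju | hju
          · have : cum g c e j ≤ cum g c e (u+p) := cum_mono g c (by omega)
            omega
          · have hj2 := cum_per g c hcyc j hju
            have := h3 (j + p) (by omega)
            omega
        · have heq : n - cum g c e (k - p)
              = n + (cum g c e (u+p) - cum g c e u) - cum g c e k := by omega
          rw [heq]; exact h4

lemma exit_periodic (N0 : ℕ) (P : E → ℕ → Prop) [Finite E] :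
    ∃ Θ Pd, 1 ≤ Pd ∧ ∀ e n, Θ ≤ n → ∀ ℓ,
      (ExitP g c N0 P e n ↔ ExitP g c N0 P e (n + ℓ * Pd)) := by
  classical
  have := Fintype.ofFinite E
  choose Θf Pdf hPd hper using fun e => exit_periodic_one g c N0 P e
  refine ⟨Finset.univ.sup Θf, ∏ e : E, Pdf e, ?_, ?_⟩
  · exact Finset.one_le_prod' (fun e _ => hPd e)
  · intro e n hn ℓ
    obtain ⟨d, hd⟩ : Pdf e ∣ ∏ e : E, Pdf e := Finset.dvd_prod_of_mem Pdf (Finset.mem_univ e)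
    have hΘ : Θf e ≤ n := le_trans (Finset.le_sup (Finset.mem_univ e)) hn
    rw [hd, show n + ℓ * (Pdf e * d) = n + (ℓ * d) * Pdf e by ring]
    -- iterate the single-period statement
    induction (ℓ * d) with
    | zero => simp
    | succ i ih =>
      rw [show n + (i+1) * Pdf e = (n + i * Pdf e) + Pdf e by ring]
      exact ih.trans (hper e (n + i * Pdf e) (by omega))

end Orbit
end WKProof

namespace WKProof
open WKAutomaton

section Auto
variable {Q : Type} (A : WKAutomaton Letter Q)

/-- Acceptance from a configuration. -/
def Acc (c : Q × List Letter) : Prop :=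
  ∃ qf ∈ A.F, Relation.ReflTransGen A.Step c (qf, [])

lemma lang_eq_acc (w : List Letter) : w ∈ A.Lang ↔ Acc A (A.q0, w) := Iff.rfl

lemma step_det (hdet : A.Deterministic) {c c₁ c₂ : Q × List Letter}
    (h1 : A.Step c c₁) (h2 : A.Step c c₂) : c₁ = c₂ := by
  obtain ⟨x₁, y₁, hw₁, hq₁⟩ := h1
  obtain ⟨x₂, y₂, hw₂, hq₂⟩ := h2
  obtain ⟨-, -, hw, hq⟩ := hdet c.1 c.2 x₁ y₁ c₁.2 x₂ y₂ c₂.2 c₁.1 c₂.1 hw₁ hq₁ hw₂ hq₂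
  exact Prod.ext hq hw

lemma acc_of_step {c c' : Q × List Letter} (h : A.Step c c') (hacc : Acc A c') :
    Acc A c := by
  obtain ⟨qf, hqf, hrt⟩ := hacc
  exact ⟨qf, hqf, Relation.ReflTransGen.head h hrt⟩

lemma acc_step_to (hdet : A.Deterministic) {c c' : Q × List Letter}
    (h : A.Step c c') (hne : c.2 ≠ []) (hacc : Acc A c) : Acc A c' := by
  obtain ⟨qf, hqf, hrt⟩ := hacc
  rcases hrt.cases_head with heq | ⟨c₁, hs, hrt₁⟩
  · exact absurd (congrArg Prod.snd heq) hne
  · rw [step_det A hdet h hs]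
    exact ⟨qf, hqf, hrt₁⟩

lemma nostep_not_acc {c : Q × List Letter} (h : ∀ c', ¬ A.Step c c')
    (hne : c.2 ≠ []) : ¬ Acc A c := by
  rintro ⟨qf, hqf, hrt⟩
  rcases hrt.cases_head with heq | ⟨c₁, hs, _⟩
  · exact hne (congrArg Prod.snd heq)
  · exact h c₁ hs

lemma exists_K : ∃ K, 1 ≤ K ∧
    ∀ q x y, (A.δ q x y).Nonempty → x.length < K ∧ y.length < K := by
  have hfin : ((fun t : Q × List Letter × List Letter =>
      max t.2.1.length t.2.2.length) ''
      {t | (A.δ t.1 t.2.1 t.2.2).Nonempty}).Finite :=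
    A.finite_delta.image _
  obtain ⟨B, hB⟩ := hfin.bddAbove
  refine ⟨B + 1, by omega, ?_⟩
  intro q x y hne
  have : max x.length y.length ≤ B := hB ⟨(q, x, y), hne, rfl⟩
  omega

section Link
variable {E : Type} (g : E → Option E) (cst : E → ℕ) (N0 : ℕ)
  (conf : E → ℕ → Q × List Letter)

/-- Abstract link: if in the region `n ≥ N0` the automaton's steps from `conf e n`
are exactly described by the finite machine `(g, cst)`, then acceptance is
equivalent to the exit predicate. -/
lemma acc_iff_exit (hdet : A.Deterministic)
    (hne : ∀ e n, N0 ≤ n → (conf e n).2 ≠ [])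
    (hstep : ∀ e n, N0 ≤ n → ∀ c', (A.Step (conf e n) c' ↔
      ∃ e', g e = some e' ∧ cst e ≤ n ∧ c' = conf e' (n - cst e)))
    (e : E) (n : ℕ) :
    Acc A (conf e n) ↔ ExitP g cst N0 (fun e' r => Acc A (conf e' r)) e n := by
  constructor
  · rintro ⟨qf, hqf, hrt⟩
    have key : ∀ (c : Q × List Letter), Relation.ReflTransGen A.Step c (qf, []) →
        ∀ e n, c = conf e n →
        ExitP g cst N0 (fun e' r => Acc A (conf e' r)) e n := by
      intro c hrt
      induction hrt using Relation.ReflTransGen.head_induction_on with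
      | refl =>
        intro e n heq
        have hn : n < N0 := by
          by_contra hcon
          exact hne e n (by omega) (by rw [← heq])
        refine ⟨0, e, rfl, Nat.zero_le _, by simpa [cum] using hn, by omega, ?_⟩
        simp only [cum, Nat.sub_zero]
        exact ⟨qf, hqf, heq ▸ Relation.ReflTransGen.refl⟩
      | head hs hrt₁ ih =>
        rename_i c₀ c₁
        intro e n heq
        subst heq
        rcases Nat.lt_or_ge n N0 with hn | hn
        · refine ⟨0, e, rfl, Nat.zero_le _, by simpa [cum] using hn, by omega, ?_⟩
          simp only [cum, Nat.sub_zero]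
          exact ⟨qf, hqf, Relation.ReflTransGen.head hs hrt₁⟩
        · obtain ⟨e', hge, hcst, hc₁⟩ := (hstep e n hn c₁).1 hs
          obtain ⟨k, e'', hk, h1, h2, h3, h4⟩ := ih e' (n - cst e) hc₁
          refine ⟨k + 1, e'', ?_, ?_, ?_, ?_, ?_⟩
          · rw [orb_shift g hge]; exact hk
          · rw [cum_shift g cst hge]; omega
          · rw [cum_shift g cst hge]; omega
          · intro j hj
            match j with
            | 0 => simpa [cum] using hn
            | j' + 1 =>
              rw [cum_shift g cst hge]
              have := h3 j' (by omega)
              omega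
          · rw [cum_shift g cst hge]
            have heq2 : n - (cst e + cum g cst e' k) = n - cst e - cum g cst e' k := by
              omega
            rw [heq2]; exact h4
    exact key _ hrt e n rfl
  · intro hex
    obtain ⟨k, e'', hk, h1, h2, h3, h4⟩ := hex
    induction k generalizing e n with
    | zero =>
      have he : e = e'' := by simpa [orb] using hk
      subst he
      simpa [cum] using h4
    | succ k ih =>
      have hn : N0 ≤ n := by
        have := h3 0 (by omega)
        simpa [cum] using this
      rcases hge : g e with _ | e₁
      · exfalso
        have h0 : orb g e 1 = none := by simp [orb, hge]
        rw [orb_none_stable g h0 (by omega)] at hk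
        exact nomatch hk
      · have hcum := cum_shift g cst hge k
        have hcst : cst e ≤ n := by
          have := h1; rw [hcum] at this; omega
        have hstep1 : A.Step (conf e n) (conf e₁ (n - cst e)) :=
          (hstep e n hn _).2 ⟨e₁, hge, hcst, rfl⟩
        apply acc_of_step A hstep1
        have hk' : orb g e₁ k = some e'' := by rw [← orb_shift g hge]; exact hk
        refine ih e₁ (n - cst e) hk' (by rw [hcum] at h1; omega)
          (by rw [hcum] at h2; omega) ?_ ?_
        · intro j hj
          have h5 := h3 (j+1) (by omega)
          rw [cum_shift g cst hge j] at h5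
          omega
        · have heq : n - cst e - cum g cst e₁ k = n - cum g cst e (k+1) := by
            rw [hcum]; omega
          rw [heq]; exact h4

end Link
end Auto
end WKProof

namespace WKProof
open WKAutomaton

section Regions
variable {Q : Type} (A : WKAutomaton Letter Q) (K : ℕ)

/-- In a step, both read words have length `< K`. -/
lemma step_decomp (hKb : ∀ q x y, (A.δ q x y).Nonempty → x.length < K ∧ y.length < K)
    {q : Q} {i j : ℕ} {c' : Q × List Letter} (h : A.Step (q, wd i j) c') :
    ∃ x y, wd i j = x ++ c'.2 ++ y ∧ c'.1 ∈ A.δ q x y ∧ x.length < K ∧ y.length < K := by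
  obtain ⟨x, y, hw, hq⟩ := h
  obtain ⟨h1, h2⟩ := hKb q x y ⟨c'.1, hq⟩
  exact ⟨x, y, hw, hq, h1, h2⟩

lemma step_big (hKb : ∀ q x y, (A.δ q x y).Nonempty → x.length < K ∧ y.length < K)
    {q : Q} {i j : ℕ} (hi : K ≤ i) (hj : K ≤ j) (c' : Q × List Letter) :
    A.Step (q, wd i j) c' ↔ ∃ s t q',
      q' ∈ A.δ q (List.replicate s a) (List.replicate t b) ∧ s < K ∧ t < K ∧
      c' = (q', wd (i - s) (j - t)) := by
  constructor
  · intro h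
    obtain ⟨x, y, hw, hq, hx, hy⟩ := step_decomp A K hKb h
    rw [List.append_assoc] at hw
    obtain ⟨hx1, hrest⟩ := split_wd hw
    rw [show min x.length i = x.length by omega, show x.length - i = 0 by omega,
      ← rep_a_eq_wd] at hx1
    rw [show x.length - i = 0 by omega, Nat.sub_zero] at hrest
    have hlen : i - x.length + j = c'.2.length + y.length := by
      have h' := congrArg List.length hrest
      simp only [wd_length, List.length_append] at h'
      omega
    obtain ⟨hmid, hy1⟩ := split_wd hrest.symm
    rw [show i - x.length - c'.2.length = 0 by omega,
      show j - (c'.2.length - (i - x.length)) = y.length by omega, ← rep_b_eq_wd] at hy1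
    rw [show min c'.2.length (i - x.length) = i - x.length by omega,
      show c'.2.length - (i - x.length) = j - y.length by omega] at hmid
    refine ⟨x.length, y.length, c'.1, ?_, by omega, by omega, ?_⟩
    · rw [← hx1, ← hy1]; exact hq
    · exact Prod.ext rfl hmid
  · rintro ⟨s, t, q', hq, hs, ht, rfl⟩
    refine ⟨List.replicate s a, List.replicate t b, ?_, hq⟩
    show wd i j = _
    conv_lhs => rw [show i = s + (i - s) by omega, wd_append_split_a,
      show j = (j - t) + t by omega, wd_append_split_b]
    simp [List.append_assoc]

lemma step_r3 (hKb : ∀ q x y, (A.δ q x y).Nonempty → x.length < K ∧ y.length < K)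
    {q : Q} {i j : ℕ} (hi : i < K) (hj : 2*K ≤ j) (c' : Q × List Letter) :
    A.Step (q, wd i j) c' ↔ ∃ i1 j1 t q',
      q' ∈ A.δ q (wd i1 j1) (List.replicate t b) ∧
      i1 ≤ i ∧ (j1 = 0 ∨ i1 = i) ∧ j1 + t < 2*K ∧
      c' = (q', wd (i - i1) (j - (j1 + t))) := by
  constructor
  · intro h
    obtain ⟨x, y, hw, hq, hx, hy⟩ := step_decomp A K hKb h
    have hxlen : x.length ≤ i + j := by
      have h' := congrArg List.length hw
      simp only [wd_length, List.length_append] at h'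
      omega
    rw [List.append_assoc] at hw
    obtain ⟨hx1, hrest⟩ := split_wd hw
    rw [show i - x.length = i - min x.length i by omega] at hrest
    have hlen : i - min x.length i + (j - (x.length - i)) = c'.2.length + y.length := by
      have h' := congrArg List.length hrest
      simp only [wd_length, List.length_append] at h'
      omega
    obtain ⟨hmid, hy1⟩ := split_wd hrest.symm
    rw [show i - min x.length i - c'.2.length = 0 by omega,
      show j - (x.length - i) - (c'.2.length - (i - min x.length i)) = y.length by omega,
      ← rep_b_eq_wd] at hy1
    rw [show min c'.2.length (i - min x.length i) = i - min x.length i by omega,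
      show c'.2.length - (i - min x.length i)
        = j - ((x.length - i) + y.length) by omega] at hmid
    refine ⟨min x.length i, x.length - i, y.length, c'.1, ?_, by omega, by omega,
      by omega, ?_⟩
    · rw [← hx1, ← hy1]; exact hq
    · exact Prod.ext rfl hmid
  · rintro ⟨i1, j1, t, q', hq, hi1, hj1, hjt, rfl⟩
    refine ⟨wd i1 j1, List.replicate t b, ?_, hq⟩
    show wd i j = _
    rcases hj1 with rfl | rfl
    · -- j1 = 0 : x is all a's
      rw [show wd i1 0 = List.replicate i1 a from by simp [wd]]
      conv_lhs => rw [show i = i1 + (i - i1) by omega, wd_append_split_a,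
        show j = (j - (0 + t)) + t by omega, wd_append_split_b]
      simp [List.append_assoc]
    · -- i1 = i : x eats all the a's and some b's
      show wd i1 j = wd i1 j1 ++ wd (i1 - i1) (j - (j1 + t)) ++ List.replicate t b
      rw [Nat.sub_self]
      rw [show wd 0 (j - (j1+t)) = List.replicate (j - (j1+t)) b from by simp [wd]]
      conv_lhs => rw [show j = j1 + ((j - (j1+t)) + t) by omega, wd_append_split_b]
      rw [List.replicate_add, List.append_assoc]

lemma step_r2 (hKb : ∀ q x y, (A.δ q x y).Nonempty → x.length < K ∧ y.length < K)
    {q : Q} {i j : ℕ} (hj : j < K) (hi : 2*K ≤ i) (c' : Q × List Letter) :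
    A.Step (q, wd i j) c' ↔ ∃ s i2 j2 q',
      q' ∈ A.δ q (List.replicate s a) (wd i2 j2) ∧
      j2 ≤ j ∧ (i2 = 0 ∨ j2 = j) ∧ s + i2 < 2*K ∧
      c' = (q', wd (i - (s + i2)) (j - j2)) := by
  constructor
  · intro h
    obtain ⟨x, y, hw, hq, hx, hy⟩ := step_decomp A K hKb h
    rw [List.append_assoc] at hw
    obtain ⟨hx1, hrest⟩ := split_wd hw
    rw [show min x.length i = x.length by omega, show x.length - i = 0 by omega,
      ← rep_a_eq_wd] at hx1
    rw [show x.length - i = 0 by omega, Nat.sub_zero] at hrest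
    have hlen : i - x.length + j = c'.2.length + y.length := by
      have h' := congrArg List.length hrest
      simp only [wd_length, List.length_append] at h'
      omega
    obtain ⟨hmid, hy1⟩ := split_wd hrest.symm
    set i2 := i - x.length - c'.2.length with hi2
    set j2 := j - (c'.2.length - (i - x.length)) with hj2
    rw [show min c'.2.length (i - x.length) = i - (x.length + i2) by omega,
      show c'.2.length - (i - x.length) = j - j2 by omega] at hmid
    refine ⟨x.length, i2, j2, c'.1, ?_, by omega, by omega, by omega, ?_⟩
    · rw [← hx1, ← hy1]; exact hq
    · exact Prod.ext rfl hmid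
  · rintro ⟨s, i2, j2, q', hq, hj2, hij2, hsi, rfl⟩
    refine ⟨List.replicate s a, wd i2 j2, ?_, hq⟩
    show wd i j = _
    rcases hij2 with rfl | rfl
    · -- i2 = 0 : y is all b's
      rw [show wd 0 j2 = List.replicate j2 b from by simp [wd]]
      conv_lhs => rw [show i = s + (i - (s + 0)) by omega, wd_append_split_a,
        show j = (j - j2) + j2 by omega, wd_append_split_b]
      simp [List.append_assoc]
    · -- j2 = j : y eats all remaining b's and some a's
      show wd i j2 = List.replicate s a ++ wd (i - (s + i2)) (j2 - j2) ++ wd i2 j2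
      rw [Nat.sub_self]
      rw [show wd (i - (s+i2)) 0 = List.replicate (i - (s+i2)) a from by simp [wd]]
      conv_lhs => rw [show i = s + ((i - (s+i2)) + i2) by omega, wd_append_split_a]
      rw [wd_append_split_a (i1 := i - (s+i2)) (i2 := i2), ← List.append_assoc]

end Regions
end WKProof

namespace WKProof
open WKAutomaton

section Data
variable {Q : Type} (A : WKAutomaton Letter Q) (K : ℕ)

/-! ### Region 3: few `a`'s (`i < K`), many `b`'s (counter). -/

/-- canonical step data for region 3 -/
def D3 (e : Q × Fin K) : Set ((Q × Fin K) × ℕ) :=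
  {d | d.2 < 2*K ∧ A.Step (e.1, wd e.2.val (2*K)) (d.1.1, wd d.1.2.val (2*K - d.2))}

noncomputable def d3 (e : Q × Fin K) : Option ((Q × Fin K) × ℕ) := by
  classical exact if h : (D3 A K e).Nonempty then some h.choose else none

lemma D3_unique (hdet : A.Deterministic) {e : Q × Fin K} {d₁ d₂ : (Q × Fin K) × ℕ}
    (h₁ : d₁ ∈ D3 A K e) (h₂ : d₂ ∈ D3 A K e) : d₁ = d₂ := by
  obtain ⟨hc₁, hs₁⟩ := h₁
  obtain ⟨hc₂, hs₂⟩ := h₂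
  have heq := step_det A hdet hs₁ hs₂
  injection heq with hfst hsnd
  have h2 := wd_inj hsnd
  have h3 : d₁.2 = d₂.2 := by omega
  have h4 : d₁.1.2 = d₂.1.2 := Fin.ext h2.1
  exact Prod.ext (Prod.ext hfst h4) h3

lemma d3_some_mem {e : Q × Fin K} {d : (Q × Fin K) × ℕ} (h : d3 A K e = some d) :
    d ∈ D3 A K e := by
  unfold d3 at h
  split at h
  · next hne => rw [Option.some_inj] at h; rw [← h]; exact hne.choose_spec
  · exact nomatch h

lemma d3_eq_some (hdet : A.Deterministic) {e : Q × Fin K} {d : (Q × Fin K) × ℕ}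
    (h : d ∈ D3 A K e) : d3 A K e = some d := by
  unfold d3
  split
  · next hne => exact congrArg some (D3_unique A K hdet hne.choose_spec h)
  · next hne => exact absurd ⟨d, h⟩ hne

/-- the machine for region 3 -/
noncomputable def g3 (e : Q × Fin K) : Option (Q × Fin K) := (d3 A K e).map Prod.fst
noncomputable def c3 (e : Q × Fin K) : ℕ := (d3 A K e).elim 0 Prod.snd

lemma hstep3 (hdet : A.Deterministic)
    (hKb : ∀ q x y, (A.δ q x y).Nonempty → x.length < K ∧ y.length < K)
    (e : Q × Fin K) (n : ℕ) (hn : 2*K ≤ n) (c' : Q × List Letter) :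
    A.Step (e.1, wd e.2.val n) c' ↔
      ∃ e', g3 A K e = some e' ∧ c3 A K e ≤ n ∧
        c' = (e'.1, wd e'.2.val (n - c3 A K e)) := by
  have hiK : e.2.val < K := e.2.isLt
  constructor
  · intro h
    rw [step_r3 A K hKb hiK hn] at h
    obtain ⟨i1, j1, t, q', hq, hi1, hj1, hjt, rfl⟩ := h
    have hstep2K : A.Step (e.1, wd e.2.val (2*K)) (q', wd (e.2.val - i1) (2*K - (j1 + t))) := by
      rw [step_r3 A K hKb hiK (le_refl _)]
      exact ⟨i1, j1, t, q', hq, hi1, hj1, hjt, rfl⟩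
    have hmem : ((q', ⟨e.2.val - i1, by omega⟩), j1 + t) ∈ D3 A K e := ⟨hjt, hstep2K⟩
    have hsome := d3_eq_some A K hdet hmem
    refine ⟨(q', ⟨e.2.val - i1, by omega⟩), ?_, ?_, ?_⟩
    · rw [g3, hsome]; rfl
    · rw [c3, hsome]; simp; omega
    · rw [c3, hsome]; rfl
  · rintro ⟨e', hg, hc, rfl⟩
    rw [g3] at hg
    obtain ⟨d, hd, hd1⟩ := Option.map_eq_some_iff.1 hg
    have hmem := d3_some_mem A K hd
    obtain ⟨hdc, hstep2K⟩ := hmem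
    rw [step_r3 A K hKb hiK (le_refl _)] at hstep2K
    obtain ⟨i1, j1, t, q', hq, hi1, hj1, hjt, heq⟩ := hstep2K
    injection heq with hfst hsnd
    have h2 := wd_inj hsnd
    have h3 : j1 + t = d.2 := by omega
    have hc3 : c3 A K e = d.2 := by rw [c3, hd]; rfl
    rw [step_r3 A K hKb hiK hn]
    refine ⟨i1, j1, t, q', hq, hi1, hj1, hjt, ?_⟩
    rw [hc3, ← hd1, ← hfst, ← h3]
    refine Prod.ext rfl ?_
    show wd (d.1.2.val) (n - (j1+t)) = wd (e.2.val - i1) (n - (j1 + t))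
    rw [h2.1]

/-! ### Region 2: few `b`'s (`j < K`), many `a`'s (counter). -/

def D2 (e : Q × Fin K) : Set ((Q × Fin K) × ℕ) :=
  {d | d.2 < 2*K ∧ A.Step (e.1, wd (2*K) e.2.val) (d.1.1, wd (2*K - d.2) d.1.2.val)}

noncomputable def d2 (e : Q × Fin K) : Option ((Q × Fin K) × ℕ) := by
  classical exact if h : (D2 A K e).Nonempty then some h.choose else none

lemma D2_unique (hdet : A.Deterministic) {e : Q × Fin K} {d₁ d₂ : (Q × Fin K) × ℕ}
    (h₁ : d₁ ∈ D2 A K e) (h₂ : d₂ ∈ D2 A K e) : d₁ = d₂ := by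
  obtain ⟨hc₁, hs₁⟩ := h₁
  obtain ⟨hc₂, hs₂⟩ := h₂
  have heq := step_det A hdet hs₁ hs₂
  injection heq with hfst hsnd
  have h2 := wd_inj hsnd
  have h3 : d₁.2 = d₂.2 := by omega
  have h4 : d₁.1.2 = d₂.1.2 := Fin.ext h2.2
  exact Prod.ext (Prod.ext hfst h4) h3

lemma d2_some_mem {e : Q × Fin K} {d : (Q × Fin K) × ℕ} (h : d2 A K e = some d) :
    d ∈ D2 A K e := by
  unfold d2 at h
  split at h
  · next hne => rw [Option.some_inj] at h; rw [← h]; exact hne.choose_spec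
  · exact nomatch h

lemma d2_eq_some (hdet : A.Deterministic) {e : Q × Fin K} {d : (Q × Fin K) × ℕ}
    (h : d ∈ D2 A K e) : d2 A K e = some d := by
  unfold d2
  split
  · next hne => exact congrArg some (D2_unique A K hdet hne.choose_spec h)
  · next hne => exact absurd ⟨d, h⟩ hne

noncomputable def g2 (e : Q × Fin K) : Option (Q × Fin K) := (d2 A K e).map Prod.fst
noncomputable def c2 (e : Q × Fin K) : ℕ := (d2 A K e).elim 0 Prod.snd

lemma hstep2 (hdet : A.Deterministic)
    (hKb : ∀ q x y, (A.δ q x y).Nonempty → x.length < K ∧ y.length < K)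
    (e : Q × Fin K) (n : ℕ) (hn : 2*K ≤ n) (c' : Q × List Letter) :
    A.Step (e.1, wd n e.2.val) c' ↔
      ∃ e', g2 A K e = some e' ∧ c2 A K e ≤ n ∧
        c' = (e'.1, wd (n - c2 A K e) e'.2.val) := by
  have hjK : e.2.val < K := e.2.isLt
  constructor
  · intro h
    rw [step_r2 A K hKb hjK hn] at h
    obtain ⟨s, i2, j2, q', hq, hj2, hij2, hsi, rfl⟩ := h
    have hstep2K : A.Step (e.1, wd (2*K) e.2.val)
        (q', wd (2*K - (s + i2)) (e.2.val - j2)) := by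
      rw [step_r2 A K hKb hjK (le_refl _)]
      exact ⟨s, i2, j2, q', hq, hj2, hij2, hsi, rfl⟩
    have hmem : ((q', ⟨e.2.val - j2, by omega⟩), s + i2) ∈ D2 A K e := ⟨hsi, hstep2K⟩
    have hsome := d2_eq_some A K hdet hmem
    refine ⟨(q', ⟨e.2.val - j2, by omega⟩), ?_, ?_, ?_⟩
    · rw [g2, hsome]; rfl
    · rw [c2, hsome]; simp; omega
    · rw [c2, hsome]; rfl
  · rintro ⟨e', hg, hc, rfl⟩
    rw [g2] at hg
    obtain ⟨d, hd, hd1⟩ := Option.map_eq_some_iff.1 hg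
    have hmem := d2_some_mem A K hd
    obtain ⟨hdc, hstep2K⟩ := hmem
    rw [step_r2 A K hKb hjK (le_refl _)] at hstep2K
    obtain ⟨s, i2, j2, q', hq, hj2, hij2, hsi, heq⟩ := hstep2K
    injection heq with hfst hsnd
    have h2 := wd_inj hsnd
    have h3 : s + i2 = d.2 := by omega
    have hc2 : c2 A K e = d.2 := by rw [c2, hd]; rfl
    rw [step_r2 A K hKb hjK hn]
    refine ⟨s, i2, j2, q', hq, hj2, hij2, hsi, ?_⟩
    rw [hc2, ← hd1, ← hfst, ← h3]
    refine Prod.ext rfl ?_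
    show wd (n - (s+i2)) (d.1.2.val) = wd (n - (s + i2)) (e.2.val - j2)
    rw [h2.2]

/-! ### Big region: both sides at least `K`. -/

def DB (q : Q) : Set (Q × ℕ × ℕ) :=
  {d | d.2.1 < K ∧ d.2.2 < K ∧ A.Step (q, wd K K) (d.1, wd (K - d.2.1) (K - d.2.2))}

noncomputable def dB (q : Q) : Option (Q × ℕ × ℕ) := by
  classical exact if h : (DB A K q).Nonempty then some h.choose else none

lemma DB_unique (hdet : A.Deterministic) {q : Q} {d₁ d₂ : Q × ℕ × ℕ}
    (h₁ : d₁ ∈ DB A K q) (h₂ : d₂ ∈ DB A K q) : d₁ = d₂ := by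
  obtain ⟨ha₁, hb₁, hs₁⟩ := h₁
  obtain ⟨ha₂, hb₂, hs₂⟩ := h₂
  have heq := step_det A hdet hs₁ hs₂
  injection heq with hfst hsnd
  have h2 := wd_inj hsnd
  have h3 : d₁.2 = d₂.2 := Prod.ext (by omega) (by omega)
  exact Prod.ext hfst h3

lemma dB_some_mem {q : Q} {d : Q × ℕ × ℕ} (h : dB A K q = some d) : d ∈ DB A K q := by
  unfold dB at h
  split at h
  · next hne => rw [Option.some_inj] at h; rw [← h]; exact hne.choose_spec
  · exact nomatch h

lemma dB_eq_some (hdet : A.Deterministic) {q : Q} {d : Q × ℕ × ℕ}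
    (h : d ∈ DB A K q) : dB A K q = some d := by
  unfold dB
  split
  · next hne => exact congrArg some (DB_unique A K hdet hne.choose_spec h)
  · next hne => exact absurd ⟨d, h⟩ hne

noncomputable def gB (q : Q) : Option Q := (dB A K q).map Prod.fst
noncomputable def cA (q : Q) : ℕ := (dB A K q).elim 0 (fun d => d.2.1)
noncomputable def cB (q : Q) : ℕ := (dB A K q).elim 0 (fun d => d.2.2)

lemma hstepB (hdet : A.Deterministic)
    (hKb : ∀ q x y, (A.δ q x y).Nonempty → x.length < K ∧ y.length < K)
    (q : Q) (m n : ℕ) (hm : K ≤ m) (hn : K ≤ n) (c' : Q × List Letter) :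
    A.Step (q, wd m n) c' ↔
      ∃ q', gB A K q = some q' ∧ cA A K q ≤ m ∧ cB A K q ≤ n ∧
        c' = (q', wd (m - cA A K q) (n - cB A K q)) := by
  constructor
  · intro h
    rw [step_big A K hKb hm hn] at h
    obtain ⟨s, t, q', hq, hs, ht, rfl⟩ := h
    have hstepKK : A.Step (q, wd K K) (q', wd (K - s) (K - t)) := by
      rw [step_big A K hKb (le_refl _) (le_refl _)]
      exact ⟨s, t, q', hq, hs, ht, rfl⟩
    have hmem : (q', s, t) ∈ DB A K q := ⟨hs, ht, hstepKK⟩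
    have hsome := dB_eq_some A K hdet hmem
    refine ⟨q', ?_, ?_, ?_, ?_⟩
    · rw [gB, hsome]; rfl
    · rw [cA, hsome]; simp; omega
    · rw [cB, hsome]; simp; omega
    · rw [cA, cB, hsome]; rfl
  · rintro ⟨q', hg, hcm, hcn, rfl⟩
    rw [gB] at hg
    obtain ⟨d, hd, hd1⟩ := Option.map_eq_some_iff.1 hg
    obtain ⟨hda, hdb, hstepKK⟩ := dB_some_mem A K hd
    rw [step_big A K hKb (le_refl _) (le_refl _)] at hstepKK
    obtain ⟨s, t, q'', hq, hs, ht, heq⟩ := hstepKK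
    injection heq with hfst hsnd
    have h2 := wd_inj hsnd
    have h3 : s = d.2.1 := by omega
    have h4 : t = d.2.2 := by omega
    have hca : cA A K q = d.2.1 := by rw [cA, hd]; rfl
    have hcb : cB A K q = d.2.2 := by rw [cB, hd]; rfl
    rw [step_big A K hKb hm hn]
    exact ⟨s, t, q'', hq, hs, ht, by rw [hca, hcb, ← hd1, ← hfst, h3, h4]⟩

end Data
end WKProof

namespace WKProof
open WKAutomaton

section LinBound

variable {E : Type} (g : E → Option E) (c1 c2 : E → ℕ)

/-- If the per-cycle costs satisfy `α·γ₁ ≤ β·γ₂`, then globally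
`α·C₁ k ≤ β·C₂ k + α·C₁(u+p)`. -/
lemma cum_linear_bound {e : E} {u p : ℕ} (hp : 1 ≤ p)
    (hcyc : orb g e (u + p) = orb g e u) (α β : ℕ)
    (hγ : α * (cum g c1 e (u+p) - cum g c1 e u) ≤ β * (cum g c2 e (u+p) - cum g c2 e u)) :
    ∀ k, α * cum g c1 e k ≤ β * cum g c2 e k + α * cum g c1 e (u+p) := by
  intro k
  induction k using Nat.strong_induction_on with
  | _ k ih =>
    rcases Nat.lt_or_ge k (u + p) with hk | hk
    · have h1 : cum g c1 e k ≤ cum g c1 e (u+p) := cum_mono g c1 (by omega)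
      have := Nat.mul_le_mul_left α h1
      omega
    · have h1 := cum_per g c1 hcyc (k - p) (by omega)
      rw [show k - p + p = k by omega] at h1
      have h2 := cum_per g c2 hcyc (k - p) (by omega)
      rw [show k - p + p = k by omega] at h2
      have ihp := ih (k - p) (by omega)
      have e1 : α * cum g c1 e k
          = α * cum g c1 e (k-p) + α * (cum g c1 e (u+p) - cum g c1 e u) := by
        rw [h1, Nat.mul_add]
      have e2 : β * cum g c2 e k
          = β * cum g c2 e (k-p) + β * (cum g c2 e (u+p) - cum g c2 e u) := by
        rw [h2, Nat.mul_add]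
      omega

end LinBound

section BigExit
variable {Q : Type} (A : WKAutomaton Letter Q) (K : ℕ)

/-- Exit predicate for the big region (both letter counts `≥ K`). -/
def ExitB (q : Q) (m n : ℕ) : Prop :=
  ∃ k q', orb (gB A K) q k = some q' ∧
    cum (gB A K) (cA A K) q k ≤ m ∧ cum (gB A K) (cB A K) q k ≤ n ∧
    (m - cum (gB A K) (cA A K) q k < K ∨ n - cum (gB A K) (cB A K) q k < K) ∧
    (∀ k' < k, K + cum (gB A K) (cA A K) q k' ≤ m ∧ K + cum (gB A K) (cB A K) q k' ≤ n) ∧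
    Acc A (q', wd (m - cum (gB A K) (cA A K) q k) (n - cum (gB A K) (cB A K) q k))

lemma acc_iff_exitB (hdet : A.Deterministic) (hK1 : 1 ≤ K)
    (hKb : ∀ q x y, (A.δ q x y).Nonempty → x.length < K ∧ y.length < K)
    (q : Q) (m n : ℕ) :
    Acc A (q, wd m n) ↔ ExitB A K q m n := by
  constructor
  · rintro ⟨qf, hqf, hrt⟩
    have key : ∀ (c : Q × List Letter), Relation.ReflTransGen A.Step c (qf, []) →
        ∀ q m n, c = (q, wd m n) → ExitB A K q m n := by
      intro c hrt
      induction hrt using Relation.ReflTransGen.head_induction_on with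
      | refl =>
        intro q m n heq
        have hm : m = 0 ∧ n = 0 := by
          have := congrArg Prod.snd heq
          simpa [wd_eq_nil] using wd_eq_nil.1 this.symm
        refine ⟨0, q, rfl, by simp [cum], by simp [cum], ?_, by omega, ?_⟩
        · simp [cum]; omega
        · simp only [cum, Nat.sub_zero]
          exact ⟨qf, hqf, heq ▸ Relation.ReflTransGen.refl⟩
      | head hs hrt₁ ih =>
        rename_i c₀ c₁
        intro q m n heq
        subst heq
        rcases Nat.lt_or_ge m K with hm | hm
        · refine ⟨0, q, rfl, by simp [cum], by simp [cum], by simp [cum]; omega,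
            by omega, ?_⟩
          simp only [cum, Nat.sub_zero]
          exact ⟨qf, hqf, Relation.ReflTransGen.head hs hrt₁⟩
        rcases Nat.lt_or_ge n K with hn | hn
        · refine ⟨0, q, rfl, by simp [cum], by simp [cum], by simp [cum]; omega,
            by omega, ?_⟩
          simp only [cum, Nat.sub_zero]
          exact ⟨qf, hqf, Relation.ReflTransGen.head hs hrt₁⟩
        · obtain ⟨q₁, hg, hcm, hcn, hc₁⟩ := (hstepB A K hdet hKb q m n hm hn c₁).1 hs
          obtain ⟨k, q'', hk, h1, h2, h3, h4, h5⟩ :=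
            ih q₁ (m - cA A K q) (n - cB A K q) hc₁
          refine ⟨k + 1, q'', ?_, ?_, ?_, ?_, ?_, ?_⟩
          · rw [orb_shift (gB A K) hg]; exact hk
          · rw [cum_shift (gB A K) (cA A K) hg]; omega
          · rw [cum_shift (gB A K) (cB A K) hg]; omega
          · rw [cum_shift (gB A K) (cA A K) hg, cum_shift (gB A K) (cB A K) hg]
            omega
          · intro j hj
            match j with
            | 0 => simp [cum]; omega
            | j' + 1 =>
              rw [cum_shift (gB A K) (cA A K) hg, cum_shift (gB A K) (cB A K) hg]
              have := h4 j' (by omega)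
              omega
          · rw [cum_shift (gB A K) (cA A K) hg, cum_shift (gB A K) (cB A K) hg]
            have e1 : m - (cA A K q + cum (gB A K) (cA A K) q₁ k)
                = m - cA A K q - cum (gB A K) (cA A K) q₁ k := by omega
            have e2 : n - (cB A K q + cum (gB A K) (cB A K) q₁ k)
                = n - cB A K q - cum (gB A K) (cB A K) q₁ k := by omega
            rw [e1, e2]; exact h5
    exact key _ hrt q m n rfl
  · intro hex
    obtain ⟨k, q'', hk, h1, h2, h3, h4, h5⟩ := hex
    induction k generalizing q m n with
    | zero =>
      have he : q = q'' := by simpa [orb] using hk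
      subst he
      simpa [cum] using h5
    | succ k ih =>
      have hmn : K ≤ m ∧ K ≤ n := by
        have := h4 0 (by omega)
        simpa [cum] using this
      rcases hge : gB A K q with _ | q₁
      · exfalso
        have h0 : orb (gB A K) q 1 = none := by simp [orb, hge]
        rw [orb_none_stable (gB A K) h0 (by omega)] at hk
        exact nomatch hk
      · have hcum1 := cum_shift (gB A K) (cA A K) hge k
        have hcum2 := cum_shift (gB A K) (cB A K) hge k
        have hca : cA A K q ≤ m := by omega
        have hcb : cB A K q ≤ n := by omega
        have hstep1 : A.Step (q, wd m n) (q₁, wd (m - cA A K q) (n - cB A K q)) :=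
          (hstepB A K hdet hKb q m n hmn.1 hmn.2 _).2 ⟨q₁, hge, hca, hcb, rfl⟩
        apply acc_of_step A hstep1
        have hk' : orb (gB A K) q₁ k = some q'' := by
          rw [← orb_shift (gB A K) hge]; exact hk
        refine ih q₁ (m - cA A K q) (n - cB A K q) hk' (by omega) (by omega)
          (by omega) ?_ ?_
        · intro j hj
          have h6 := h4 (j+1) (by omega)
          rw [cum_shift (gB A K) (cA A K) hge j, cum_shift (gB A K) (cB A K) hge j] at h6
          omega
        · have e1 : m - cA A K q - cum (gB A K) (cA A K) q₁ k
              = m - cum (gB A K) (cA A K) q (k+1) := by omega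
          have e2 : n - cB A K q - cum (gB A K) (cB A K) q₁ k
              = n - cum (gB A K) (cB A K) q (k+1) := by omega
          rw [e1, e2]; exact h5

end BigExit
end WKProof

namespace WKProof
open WKAutomaton

/-- The stateless automaton: δ(q,a,b) = δ(q,a,bb) = {q}. -/
def OA : WKAutomaton Letter Unit where
  q0 := ()
  F := {()}
  δ := fun _ x y => {u | x = [a] ∧ (y = [b] ∨ y = [b, b])}
  finite_delta := by
    apply Set.Finite.subset ((Set.finite_singleton ((), [a], [b, b])).insert ((), [a], [b]))
    rintro ⟨q, x, y⟩ ⟨u, hu⟩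
    obtain ⟨rfl, (rfl | rfl)⟩ := hu
    · exact Set.mem_insert _ _
    · exact Set.mem_insert_of_mem _ rfl

lemma OA_stateless : OA.Stateless := ⟨fun _ => rfl, rfl⟩

lemma OA_step_iff (c c' : Unit × List Letter) :
    OA.Step c c' ↔ (c.2 = [a] ++ c'.2 ++ [b] ∨ c.2 = [a] ++ c'.2 ++ [b, b]) := by
  constructor
  · rintro ⟨x, y, hw, rfl, (rfl | rfl)⟩
    · exact Or.inl hw
    · exact Or.inr hw
  · rintro (h | h)
    · exact ⟨[a], [b], h, rfl, Or.inl rfl⟩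
    · exact ⟨[a], [b, b], h, rfl, Or.inr rfl⟩

lemma peel_b {m n : ℕ} (hn : 1 ≤ n) :
    wd (m + 1) n = [a] ++ wd m (n - 1) ++ [b] := by
  have : wd (m+1) n = List.replicate 1 a ++ wd m ((n-1) + 1) := by
    rw [← wd_append_split_a]; congr 1 <;> omega
  rw [this, wd_append_split_b]
  simp

lemma peel_bb {m n : ℕ} (hn : 2 ≤ n) :
    wd (m + 1) n = [a] ++ wd m (n - 2) ++ [b, b] := by
  have : wd (m+1) n = List.replicate 1 a ++ wd m ((n-2) + 2) := by
    rw [← wd_append_split_a]; congr 1 <;> omega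
  rw [this, wd_append_split_b]
  simp

lemma OA_accepts {m n : ℕ} (h1 : m ≤ n) (h2 : n ≤ 2 * m) :
    Relation.ReflTransGen OA.Step ((), wd m n) ((), []) := by
  induction m generalizing n with
  | zero =>
    have : n = 0 := by omega
    subst this
    exact Relation.ReflTransGen.refl
  | succ m ih =>
    by_cases hc : n ≤ 2 * m + 1
    · refine Relation.ReflTransGen.head ((OA_step_iff _ ((), wd m (n-1))).2 (Or.inl ?_))
        (ih (by omega) (by omega))
      exact peel_b (by omega)
    · refine Relation.ReflTransGen.head ((OA_step_iff _ ((), wd m (n-2))).2 (Or.inr ?_))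
        (ih (by omega) (by omega))
      exact peel_bb (by omega)

lemma OA_sound {c : Unit × List Letter} (h : Relation.ReflTransGen OA.Step c ((), [])) :
    c.2 ∈ Lo := by
  induction h using Relation.ReflTransGen.head_induction_on with
  | refl => exact ⟨0, 0, le_refl _, by omega, rfl⟩
  | head hstep _ ih =>
    rename_i c₁ c₂ _
    obtain ⟨m, n, h1, h2, h3⟩ := ih
    rw [OA_step_iff] at hstep
    have hc2 : c₂.2 = wd m n := h3
    rcases hstep with h | h
    · refine ⟨m + 1, n + 1, by omega, by omega, ?_⟩
      rw [h, hc2]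
      show [a] ++ wd m n ++ [b] = wd (m+1) (n+1)
      rw [peel_b (m := m) (n := n + 1) (by omega)]
      norm_num
    · refine ⟨m + 1, n + 2, by omega, by omega, ?_⟩
      rw [h, hc2]
      show [a] ++ wd m n ++ [b, b] = wd (m+1) (n+2)
      rw [peel_bb (m := m) (n := n + 2) (by omega)]
      norm_num

lemma part1 : AcceptsWith Letter (fun _ A => A.Stateless) Lo := by
  refine ⟨Unit, inferInstance, OA, OA_stateless, ?_⟩
  intro w _
  constructor
  · rintro ⟨qf, _, hrt⟩
    exact OA_sound hrt
  · rintro ⟨m, n, h1, h2, rfl⟩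
    exact ⟨(), rfl, OA_accepts h1 h2⟩

end WKProof

namespace WKProof
open WKAutomaton

theorem part2 : ¬ AcceptsWith Letter (fun _ A => A.Deterministic) Lo := by
  rintro ⟨Q, hfinQ, A, hdet, hlang⟩
  haveI := hfinQ
  haveI := Fintype.ofFinite Q
  classical
  obtain ⟨K, hK1, hKb⟩ := exists_K A
  -- membership transfer
  have hLoAcc : ∀ m n : ℕ, 1 ≤ m + n → (Acc A (A.q0, wd m n) ↔ (m ≤ n ∧ n ≤ 2*m)) := by
    intro m n h1
    have hne : wd m n ≠ [] := by rw [Ne, wd_eq_nil]; omega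
    rw [← wd_mem_Lo]
    exact hlang (wd m n) hne
  -- region 2 and 3 exit periodicity
  obtain ⟨Th2, P2, hP2, hper2⟩ := exit_periodic (g2 A K) (c2 A K) (2*K)
    (fun e r => Acc A (e.1, wd r e.2.val))
  obtain ⟨Th3, P3, hP3, hper3⟩ := exit_periodic (g3 A K) (c3 A K) (2*K)
    (fun e r => Acc A (e.1, wd e.2.val r))
  -- links
  have link2 : ∀ (e : Q × Fin K) n, Acc A (e.1, wd n e.2.val) ↔
      ExitP (g2 A K) (c2 A K) (2*K) (fun e r => Acc A (e.1, wd r e.2.val)) e n := by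
    intro e n
    refine acc_iff_exit A (g2 A K) (c2 A K) (2*K)
      (fun e n => (e.1, wd n e.2.val)) hdet ?_ ?_ e n
    · intro e n hn
      show wd n e.2.val ≠ []
      rw [Ne, wd_eq_nil]; omega
    · intro e n hn c'
      exact hstep2 A K hdet hKb e n hn c'
  have link3 : ∀ (e : Q × Fin K) n, Acc A (e.1, wd e.2.val n) ↔
      ExitP (g3 A K) (c3 A K) (2*K) (fun e r => Acc A (e.1, wd e.2.val r)) e n := by
    intro e n
    refine acc_iff_exit A (g3 A K) (c3 A K) (2*K)
      (fun e n => (e.1, wd e.2.val n)) hdet ?_ ?_ e n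
    · intro e n hn
      show wd e.2.val n ≠ []
      rw [Ne, wd_eq_nil]; omega
    · intro e n hn c'
      exact hstep3 A K hdet hKb e n hn c'
  -- acceptance periodicity in the two half-bounded regions
  have accper2 : ∀ (q : Q) (j : Fin K) (n ℓ : ℕ), Th2 ≤ n →
      (Acc A (q, wd n j.val) ↔ Acc A (q, wd (n + ℓ * P2) j.val)) := by
    intro q j n ℓ hn
    rw [link2 (q, j) n, link2 (q, j) (n + ℓ * P2)]
    exact hper2 (q, j) n hn ℓ
  have accper3 : ∀ (q : Q) (i : Fin K) (n ℓ : ℕ), Th3 ≤ n →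
      (Acc A (q, wd i.val n) ↔ Acc A (q, wd i.val (n + ℓ * P3))) := by
    intro q i n ℓ hn
    rw [link3 (q, i) n, link3 (q, i) (n + ℓ * P3)]
    exact hper3 (q, i) n hn ℓ
  set P := P2 * P3 with hPdef
  have hP1 : 1 ≤ P := Nat.one_le_iff_ne_zero.2 (by positivity)
  -- big-region orbit cycle
  obtain ⟨x, y, hxy, hmap⟩ :=
    Finite.exists_ne_map_eq_of_infinite (fun k : ℕ => orb (gB A K) A.q0 k)
  obtain ⟨u, p, hp, hcyc⟩ : ∃ u p, 1 ≤ p ∧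
      orb (gB A K) A.q0 (u + p) = orb (gB A K) A.q0 u := by
    rcases Nat.lt_or_ge x y with h | h
    · exact ⟨x, y - x, by omega, by rw [show x + (y-x) = y by omega]; exact hmap.symm⟩
    · exact ⟨y, x - y, by omega, by rw [show y + (x-y) = x by omega]; exact hmap⟩
  rcases Nat.lt_or_ge
      (2 * (cum (gB A K) (cA A K) A.q0 (u+p) - cum (gB A K) (cA A K) A.q0 u))
      (cum (gB A K) (cB A K) A.q0 (u+p) - cum (gB A K) (cB A K) A.q0 u + 1)
    with hbb | hab
  · -- b-side exits first: compare a^m b^m with a^(m+P) b^m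
    have hb := cum_linear_bound (gB A K) (cA A K) (cB A K) hp hcyc 2 1 (by omega)
    set m := 2 * cum (gB A K) (cA A K) A.q0 (u+p) + 2*Th2 + 2*K + 1 with hmdef
    have hacc : Acc A (A.q0, wd m m) := (hLoAcc m m (by omega)).2 (by omega)
    obtain ⟨k, q', hk, h1, h2, h3, h4, h5⟩ :=
      (acc_iff_exitB A K hdet hK1 hKb A.q0 m m).1 hacc
    have hbk := hb k
    have hI : Th2 + K ≤ m - cum (gB A K) (cA A K) A.q0 k := by omega
    have hjlt : m - cum (gB A K) (cB A K) A.q0 k < K := by omega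
    have hacc2 : Acc A (A.q0, wd (m + P) m) := by
      rw [acc_iff_exitB A K hdet hK1 hKb]
      refine ⟨k, q', hk, by omega, h2, Or.inr hjlt, ?_, ?_⟩
      · intro k' hk'
        have := h4 k' hk'
        omega
      · have heq : m + P - cum (gB A K) (cA A K) A.q0 k
            = (m - cum (gB A K) (cA A K) A.q0 k) + P3 * P2 := by
          rw [Nat.mul_comm]; omega
        rw [heq]
        exact (accper2 q' ⟨m - cum (gB A K) (cB A K) A.q0 k, hjlt⟩
          (m - cum (gB A K) (cA A K) A.q0 k) P3 (by omega)).1 h5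
    have := ((hLoAcc (m + P) m (by omega)).1 hacc2).1
    omega
  · -- a-side exits first: compare a^m b^(2m) with a^m b^(2m+P)
    have hGa1 : 1 ≤ cum (gB A K) (cA A K) A.q0 (u+p) - cum (gB A K) (cA A K) A.q0 u := by
      omega
    have hb := cum_linear_bound (gB A K) (cB A K) (cA A K) hp hcyc
      (cum (gB A K) (cA A K) A.q0 (u+p) - cum (gB A K) (cA A K) A.q0 u)
      (cum (gB A K) (cB A K) A.q0 (u+p) - cum (gB A K) (cB A K) A.q0 u)
      (by rw [Nat.mul_comm])
    set Ga := cum (gB A K) (cA A K) A.q0 (u+p) - cum (gB A K) (cA A K) A.q0 u with hGadef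
    set Gb := cum (gB A K) (cB A K) A.q0 (u+p) - cum (gB A K) (cB A K) A.q0 u with hGbdef
    set B' := cum (gB A K) (cB A K) A.q0 (u+p) with hB'def
    set m := Ga * (B' + Th3 + K) + Th3 + K + 1 with hmdef
    have hacc : Acc A (A.q0, wd m (2*m)) := (hLoAcc m (2*m) (by omega)).2 (by omega)
    obtain ⟨k, q', hk, h1, h2, h3, h4, h5⟩ :=
      (acc_iff_exitB A K hdet hK1 hKb A.q0 m (2*m)).1 hacc
    have hbk := hb k
    -- nonlinear bound: Th3 + K ≤ 2m - SB
    have hj : Th3 + K ≤ 2*m - cum (gB A K) (cB A K) A.q0 k := by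
      have hkey : cum (gB A K) (cB A K) A.q0 k + (Th3 + K) ≤ 2*m := by
        have t0 : Ga * (cum (gB A K) (cB A K) A.q0 k + (Th3 + K))
            ≤ Gb * cum (gB A K) (cA A K) A.q0 k + Ga * B' + Ga * (Th3 + K) := by
          have expand : Ga * (cum (gB A K) (cB A K) A.q0 k + (Th3 + K))
              = Ga * cum (gB A K) (cB A K) A.q0 k + Ga * (Th3 + K) := by ring
          omega
        have t1 : Gb * cum (gB A K) (cA A K) A.q0 k ≤ Gb * m :=
          Nat.mul_le_mul_left Gb h1
        have t2 : Gb * m + m ≤ Ga * (2*m) := by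
          have t3 : (Gb + 1) * m ≤ (2 * Ga) * m := Nat.mul_le_mul_right m hab
          have e3 : (Gb + 1) * m = Gb * m + m := by ring
          have e4 : (2 * Ga) * m = Ga * (2*m) := by ring
          omega
        have t4 : Ga * B' + Ga * (Th3 + K) ≤ m := by
          have e5 : Ga * B' + Ga * (Th3 + K) = Ga * (B' + Th3 + K) := by ring
          omega
        have t5 : Ga * (cum (gB A K) (cB A K) A.q0 k + (Th3 + K)) ≤ Ga * (2*m) := by
          omega
        exact Nat.le_of_mul_le_mul_left t5 (by omega)
      omega
    have hilt : m - cum (gB A K) (cA A K) A.q0 k < K := by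
      rcases h3 with h | h
      · exact h
      · omega
    have hacc2 : Acc A (A.q0, wd m (2*m + P)) := by
      rw [acc_iff_exitB A K hdet hK1 hKb]
      refine ⟨k, q', hk, h1, by omega, Or.inl hilt, ?_, ?_⟩
      · intro k' hk'
        have := h4 k' hk'
        omega
      · have heq : 2*m + P - cum (gB A K) (cB A K) A.q0 k
            = (2*m - cum (gB A K) (cB A K) A.q0 k) + P2 * P3 := by
          omega
        rw [heq]
        exact (accper3 q' ⟨m - cum (gB A K) (cA A K) A.q0 k, hilt⟩
          (2*m - cum (gB A K) (cB A K) A.q0 k) P2 (by omega)).1 h5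
    have := ((hLoAcc m (2*m + P) (by omega)).1 hacc2).2
    omega

end WKProof

/-- The language `L_o = { aᵐbⁿ : m ≤ n ≤ 2m }` is accepted by a stateless sensing
5'→3' WK automaton, but `L_o` is not accepted by any deterministic sensing
5'→3' WK automaton (languages compared modulo the empty word). -/
theorem Lo_stateless_not_deterministic :
    AcceptsWith Letter (fun _ A => A.Stateless) Lo ∧
    ¬ AcceptsWith Letter (fun _ A => A.Deterministic) Lo :=
  ⟨WKProof.part1, WKProof.part2⟩
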